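/- Set γ = −1/2, α = 1, β = 0, κ = 0 and μ = 1, and let c₁, c₂ be real constants. Then for arbitrary twice continuously differentiable functions w, A, B : ℝ → ℝ, the function u(x,t) = w(t)·cosh(x + A(t)) + B(t)·sinh(x + A(t)) + c₁·t + c₂ solves equation (1) at every point (x,t) ∈ ℝ². -/

import Mathlib

/-- `u` solves equation (1), the nonlinear fourth order PDE
`u_tt = (κ u + γ u²)_xx + u u_xxxx + μ u_xxtt + α u_x u_xxx + β (u_xx)²`,
at the point `(x, t)`. -/
noncomputable def SolvesEq1 (α β γ κ μ : ℝ) (u : ℝ → ℝ → ℝ) (x t : ℝ) : Prop :=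
  iteratedDeriv 2 (fun s => u x s) t =
    iteratedDeriv 2 (fun y => κ * u y t + γ * (u y t) ^ 2) x
    + u x t * iteratedDeriv 4 (fun y => u y t) x
    + μ * iteratedDeriv 2 (fun y => iteratedDeriv 2 (fun s => u y s) t) x
    + α * deriv (fun y => u y t) x * iteratedDeriv 3 (fun y => u y t) x
    + β * (iteratedDeriv 2 (fun y => u y t) x) ^ 2

private lemma itd2 (f : ℝ → ℝ) : iteratedDeriv 2 f = deriv (deriv f) := by
  rw [show (2:ℕ) = 1 + 1 from rfl, iteratedDeriv_succ, iteratedDeriv_one]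

private lemma itd3 (f : ℝ → ℝ) : iteratedDeriv 3 f = deriv (deriv (deriv f)) := by
  rw [show (3:ℕ) = 2 + 1 from rfl, iteratedDeriv_succ, itd2]

private lemma itd4 (f : ℝ → ℝ) : iteratedDeriv 4 f = deriv (deriv (deriv (deriv f))) := by
  rw [show (4:ℕ) = 3 + 1 from rfl, iteratedDeriv_succ, itd3]

private lemma hd_cs (a b c : ℝ) (x : ℝ) :
    HasDerivAt (fun y => a * Real.cosh (y + c) + b * Real.sinh (y + c))
      (a * Real.sinh (x + c) + b * Real.cosh (x + c)) x := by
  have h1 : HasDerivAt (fun y : ℝ => y + c) 1 x := (hasDerivAt_id x).add_const c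
  have hc : HasDerivAt (fun y : ℝ => Real.cosh (y + c)) (Real.sinh (x + c)) x := by
    simpa [Function.comp_def] using (Real.hasDerivAt_cosh (x + c)).comp x h1
  have hs : HasDerivAt (fun y : ℝ => Real.sinh (y + c)) (Real.cosh (x + c)) x := by
    simpa [Function.comp_def] using (Real.hasDerivAt_sinh (x + c)).comp x h1
  exact (hc.const_mul a).add (hs.const_mul b)

private lemma hd_sc (a b c : ℝ) (x : ℝ) :
    HasDerivAt (fun y => a * Real.sinh (y + c) + b * Real.cosh (y + c))
      (a * Real.cosh (x + c) + b * Real.sinh (x + c)) x := by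
  have h1 : HasDerivAt (fun y : ℝ => y + c) 1 x := (hasDerivAt_id x).add_const c
  have hc : HasDerivAt (fun y : ℝ => Real.cosh (y + c)) (Real.sinh (x + c)) x := by
    simpa [Function.comp_def] using (Real.hasDerivAt_cosh (x + c)).comp x h1
  have hs : HasDerivAt (fun y : ℝ => Real.sinh (y + c)) (Real.cosh (x + c)) x := by
    simpa [Function.comp_def] using (Real.hasDerivAt_sinh (x + c)).comp x h1
  exact (hs.const_mul a).add (hc.const_mul b)

private lemma hd_csk (a b c k₁ k₂ : ℝ) (x : ℝ) :
    HasDerivAt (fun y => a * Real.cosh (y + c) + b * Real.sinh (y + c) + k₁ + k₂)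
      (a * Real.sinh (x + c) + b * Real.cosh (x + c)) x :=
  ((hd_cs a b c x).add_const k₁).add_const k₂

private lemma dcsk (a b c k₁ k₂ : ℝ) :
    deriv (fun y => a * Real.cosh (y + c) + b * Real.sinh (y + c) + k₁ + k₂)
      = fun x => a * Real.sinh (x + c) + b * Real.cosh (x + c) :=
  funext fun x => (hd_csk a b c k₁ k₂ x).deriv

private lemma dsc (a b c : ℝ) :
    deriv (fun y => a * Real.sinh (y + c) + b * Real.cosh (y + c))
      = fun x => a * Real.cosh (x + c) + b * Real.sinh (x + c) :=
  funext fun x => (hd_sc a b c x).deriv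

private lemma dcs (a b c : ℝ) :
    deriv (fun y => a * Real.cosh (y + c) + b * Real.sinh (y + c))
      = fun x => a * Real.sinh (x + c) + b * Real.cosh (x + c) :=
  funext fun x => (hd_cs a b c x).deriv

private lemma d1k (a b c k₁ k₂ : ℝ) (x : ℝ) :
    deriv (fun y => a * Real.cosh (y + c) + b * Real.sinh (y + c) + k₁ + k₂) x
      = a * Real.sinh (x + c) + b * Real.cosh (x + c) :=
  (hd_csk a b c k₁ k₂ x).deriv

private lemma it2k (a b c k₁ k₂ : ℝ) (x : ℝ) :
    iteratedDeriv 2 (fun y => a * Real.cosh (y + c) + b * Real.sinh (y + c) + k₁ + k₂) x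
      = a * Real.cosh (x + c) + b * Real.sinh (x + c) := by
  rw [itd2, dcsk]
  exact (hd_sc a b c x).deriv

private lemma it3k (a b c k₁ k₂ : ℝ) (x : ℝ) :
    iteratedDeriv 3 (fun y => a * Real.cosh (y + c) + b * Real.sinh (y + c) + k₁ + k₂) x
      = a * Real.sinh (x + c) + b * Real.cosh (x + c) := by
  rw [itd3, dcsk, dsc]
  exact (hd_cs a b c x).deriv

private lemma it4k (a b c k₁ k₂ : ℝ) (x : ℝ) :
    iteratedDeriv 4 (fun y => a * Real.cosh (y + c) + b * Real.sinh (y + c) + k₁ + k₂) x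
      = a * Real.cosh (x + c) + b * Real.sinh (x + c) := by
  rw [itd4, dcsk, dsc, dcs]
  exact (hd_sc a b c x).deriv

private lemma it2cs (a b c : ℝ) (x : ℝ) :
    iteratedDeriv 2 (fun y => a * Real.cosh (y + c) + b * Real.sinh (y + c)) x
      = a * Real.cosh (x + c) + b * Real.sinh (x + c) := by
  rw [itd2, dcs]
  exact (hd_sc a b c x).deriv

private lemma it2quad (κ γ a b c k₁ k₂ : ℝ) (x : ℝ) :
    iteratedDeriv 2
      (fun y => κ * (a * Real.cosh (y + c) + b * Real.sinh (y + c) + k₁ + k₂)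
        + γ * (a * Real.cosh (y + c) + b * Real.sinh (y + c) + k₁ + k₂) ^ 2) x
      = κ * (a * Real.cosh (x + c) + b * Real.sinh (x + c))
        + 2 * γ * ((a * Real.sinh (x + c) + b * Real.cosh (x + c)) ^ 2
          + (a * Real.cosh (x + c) + b * Real.sinh (x + c) + k₁ + k₂)
            * (a * Real.cosh (x + c) + b * Real.sinh (x + c))) := by
  rw [itd2]
  have hder : deriv (fun y => κ * (a * Real.cosh (y + c) + b * Real.sinh (y + c) + k₁ + k₂)
        + γ * (a * Real.cosh (y + c) + b * Real.sinh (y + c) + k₁ + k₂) ^ 2)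
      = fun y => κ * (a * Real.sinh (y + c) + b * Real.cosh (y + c))
        + γ * (2 * (a * Real.cosh (y + c) + b * Real.sinh (y + c) + k₁ + k₂)
          * (a * Real.sinh (y + c) + b * Real.cosh (y + c))) := by
    funext y
    have hU := hd_csk a b c k₁ k₂ y
    have h := (hU.const_mul κ).add ((hU.pow 2).const_mul γ)
    exact h.deriv.trans (by norm_num)
  rw [hder]
  have hU := hd_csk a b c k₁ k₂ x
  have hV := hd_sc a b c x
  have h := ((hd_sc a b c x).const_mul κ).add (((hU.const_mul 2).mul hV).const_mul γ)
  exact h.deriv.trans (by ring)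

private lemma t2 (c₁ c₂ : ℝ) (w A B : ℝ → ℝ)
    (hw : ContDiff ℝ 2 w) (hA : ContDiff ℝ 2 A) (hB : ContDiff ℝ 2 B) (x t : ℝ) :
    iteratedDeriv 2
      (fun s => w s * Real.cosh (x + A s) + B s * Real.sinh (x + A s) + c₁ * s + c₂) t
    = (deriv (deriv w) t + w t * deriv A t ^ 2 + 2 * deriv B t * deriv A t
        + B t * deriv (deriv A) t) * Real.cosh (x + A t)
      + (deriv (deriv B) t + B t * deriv A t ^ 2 + 2 * deriv w t * deriv A t
        + w t * deriv (deriv A) t) * Real.sinh (x + A t) := by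
  have two : ((1:WithTop ℕ∞) + 1) = 2 := by norm_num
  have hw1 : Differentiable ℝ w := hw.differentiable (by norm_num)
  have hA1 : Differentiable ℝ A := hA.differentiable (by norm_num)
  have hB1 : Differentiable ℝ B := hB.differentiable (by norm_num)
  have hw2 : Differentiable ℝ (deriv w) := by
    have : ContDiff ℝ ((1:WithTop ℕ∞) + 1) w := by rw [two]; exact hw
    exact ((contDiff_succ_iff_deriv.mp this).2.2).differentiable one_ne_zero
  have hA2 : Differentiable ℝ (deriv A) := by
    have : ContDiff ℝ ((1:WithTop ℕ∞) + 1) A := by rw [two]; exact hA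
    exact ((contDiff_succ_iff_deriv.mp this).2.2).differentiable one_ne_zero
  have hB2 : Differentiable ℝ (deriv B) := by
    have : ContDiff ℝ ((1:WithTop ℕ∞) + 1) B := by rw [two]; exact hB
    exact ((contDiff_succ_iff_deriv.mp this).2.2).differentiable one_ne_zero
  have hch : ∀ s : ℝ, HasDerivAt (fun s : ℝ => Real.cosh (x + A s))
      (Real.sinh (x + A s) * deriv A s) s := by
    intro s
    have hAs : HasDerivAt (fun s : ℝ => x + A s) (deriv A s) s :=
      ((hA1 s).hasDerivAt).const_add x
    simpa [Function.comp_def] using (Real.hasDerivAt_cosh (x + A s)).comp s hAs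
  have hsh : ∀ s : ℝ, HasDerivAt (fun s : ℝ => Real.sinh (x + A s))
      (Real.cosh (x + A s) * deriv A s) s := by
    intro s
    have hAs : HasDerivAt (fun s : ℝ => x + A s) (deriv A s) s :=
      ((hA1 s).hasDerivAt).const_add x
    simpa [Function.comp_def] using (Real.hasDerivAt_sinh (x + A s)).comp s hAs
  have key : ∀ s : ℝ, HasDerivAt
      (fun s => w s * Real.cosh (x + A s) + B s * Real.sinh (x + A s) + c₁ * s + c₂)
      (deriv w s * Real.cosh (x + A s) + w s * (Real.sinh (x + A s) * deriv A s)
        + (deriv B s * Real.sinh (x + A s) + B s * (Real.cosh (x + A s) * deriv A s))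
        + c₁ * 1) s := by
    intro s
    exact ((((hw1 s).hasDerivAt.mul (hch s)).add ((hB1 s).hasDerivAt.mul (hsh s))).add
      ((hasDerivAt_id s).const_mul c₁)).add_const c₂
  have hder : deriv (fun s => w s * Real.cosh (x + A s) + B s * Real.sinh (x + A s)
        + c₁ * s + c₂)
      = fun s => deriv w s * Real.cosh (x + A s) + w s * (Real.sinh (x + A s) * deriv A s)
        + (deriv B s * Real.sinh (x + A s) + B s * (Real.cosh (x + A s) * deriv A s))
        + c₁ * 1 := funext fun s => (key s).deriv
  rw [itd2, hder]
  have hbig := ((((hw2 t).hasDerivAt.mul (hch t)).add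
      ((hw1 t).hasDerivAt.mul ((hsh t).mul (hA2 t).hasDerivAt))).add
      (((hB2 t).hasDerivAt.mul (hsh t)).add
        ((hB1 t).hasDerivAt.mul ((hch t).mul (hA2 t).hasDerivAt)))).add_const (c₁ * 1)
  exact hbig.deriv.trans (by simp only [Pi.mul_apply]; ring)

theorem singular_nonclassical_case_a_solves_eq1 (c₁ c₂ : ℝ)
    (w A B : ℝ → ℝ)
    (hw : ContDiff ℝ 2 w) (hA : ContDiff ℝ 2 A) (hB : ContDiff ℝ 2 B) :
    ∀ x t : ℝ,
      SolvesEq1 1 0 (-1 / 2) 0 1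
        (fun x t =>
          w t * Real.cosh (x + A t) + B t * Real.sinh (x + A t)
            + c₁ * t + c₂) x t := by
  intro x t
  simp only [SolvesEq1]
  simp only [t2 c₁ c₂ w A B hw hA hB, it2quad, it2k, it3k, it4k, it2cs, d1k]
  ring
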